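/- Strong duality for the τ-restricted total-variation deconvolution problem (Proposition 1): for every binary vector τ ∈ {0,1}^n, the primal optimal value p(τ) equals the dual optimal value d(τ). -/

import Mathlib

open Matrix BigOperators
set_option maxHeartbeats 2000000

lemma aux_sqrt_eq_zero_iff (a b : ℝ) : Real.sqrt (a^2+b^2) = 0 ↔ a = 0 ∧ b = 0 := by
  constructor
  · intro h
    have h2 := Real.sqrt_eq_zero'.1 h
    constructor <;> nlinarith [sq_nonneg a, sq_nonneg b]
  · rintro ⟨rfl, rfl⟩; simp

lemma aux_sqrt_smul (t a b : ℝ) (ht : 0 ≤ t) :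
    Real.sqrt ((t*a)^2+(t*b)^2) = t * Real.sqrt (a^2+b^2) := by
  rw [show (t*a)^2+(t*b)^2 = t^2*(a^2+b^2) by ring, Real.sqrt_mul (sq_nonneg t),
    Real.sqrt_sq ht]

lemma aux_cauchy (a b c d : ℝ) : a*b + c*d ≤ Real.sqrt (a^2+c^2) * Real.sqrt (b^2+d^2) := by
  calc a*b+c*d ≤ |a*b+c*d| := le_abs_self _
    _ = Real.sqrt ((a*b+c*d)^2) := (Real.sqrt_sq_eq_abs _).symm
    _ ≤ Real.sqrt ((a^2+c^2)*(b^2+d^2)) := Real.sqrt_le_sqrt (by nlinarith [sq_nonneg (a*d - c*b)])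
    _ = Real.sqrt (a^2+c^2)*Real.sqrt (b^2+d^2) := Real.sqrt_mul (by positivity) _

lemma aux_sqrt_triangle (a b c d : ℝ) :
    Real.sqrt ((a+b)^2+(c+d)^2) ≤ Real.sqrt (a^2+c^2) + Real.sqrt (b^2+d^2) := by
  have h1 := Real.sq_sqrt (show (0:ℝ) ≤ a^2+c^2 by positivity)
  have h2 := Real.sq_sqrt (show (0:ℝ) ≤ b^2+d^2 by positivity)
  have h3 := aux_cauchy a b c d
  calc Real.sqrt ((a+b)^2+(c+d)^2)
      ≤ Real.sqrt ((Real.sqrt (a^2+c^2) + Real.sqrt (b^2+d^2))^2) :=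
        Real.sqrt_le_sqrt (by nlinarith)
    _ = _ := Real.sqrt_sq (by positivity)

lemma aux_concave (v w b c : ℝ) (h : Real.sqrt (v^2+w^2) ≠ 0) :
    Real.sqrt ((v+b)^2+(w+c)^2) ≤
      Real.sqrt (v^2+w^2) + (2*(v*b+w*c) + (b^2+c^2)) / (2*Real.sqrt (v^2+w^2)) := by
  set s := Real.sqrt (v^2+w^2) with hs
  set q := Real.sqrt ((v+b)^2+(w+c)^2) with hq
  have hs0 : 0 < s := lt_of_le_of_ne (Real.sqrt_nonneg _) (Ne.symm h)
  have hs2 : s^2 = v^2+w^2 := Real.sq_sqrt (by positivity)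
  have hq2 : q^2 = (v+b)^2+(w+c)^2 := Real.sq_sqrt (by positivity)
  rw [← sub_le_iff_le_add', le_div_iff₀ (by positivity)]
  nlinarith [sq_nonneg (s - q)]

lemma aux_small_t (E C : ℝ) (hC : 0 ≤ C) (h : ∀ t : ℝ, 0 < t → t ≤ 1 → 0 ≤ t*E + t^2*C) :
    0 ≤ E := by
  by_contra h'
  push_neg at h'
  have hC1 : (0:ℝ) < C + 1 := by linarith
  set t := min 1 (-E/(C+1)) with ht
  have ht0 : 0 < t := lt_min one_pos (div_pos (by linarith) hC1)
  have ht1 : t ≤ 1 := min_le_left _ _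
  have ht2 : t ≤ -E/(C+1) := min_le_right _ _
  have h2 := h t ht0 ht1
  have key : E + t*C < 0 := by
    have h3 : t*C ≤ (-E/(C+1))*C := mul_le_mul_of_nonneg_right ht2 hC
    have h4 : (-E/(C+1))*C < -E := by
      rw [div_mul_eq_mul_div, div_lt_iff₀ hC1]; nlinarith
    linarith
  have h5 : t*(E + t*C) < 0 := mul_neg_of_pos_of_neg ht0 key
  nlinarith

lemma aux_swap {n : ℕ} (M : Matrix (Fin n) (Fin n) ℝ) (a x : Fin n → ℝ) :
    ∑ i, a i * M.mulVec x i = ∑ k, Mᵀ.mulVec a k * x k := by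
  simp only [Matrix.mulVec, dotProduct, Matrix.transpose_apply, Finset.mul_sum,
    Finset.sum_mul]
  rw [Finset.sum_comm]
  exact Finset.sum_congr rfl fun k _ => Finset.sum_congr rfl fun i _ => by ring

lemma aux_functional {n : ℕ} (φ : (Fin n → ℝ) →ₗ[ℝ] ℝ) (b : Fin n → ℝ) :
    φ b = ∑ i, b i * φ (Pi.single i 1) := by
  conv_lhs => rw [← Finset.univ_sum_single b]
  rw [map_sum]
  refine Finset.sum_congr rfl fun i _ => ?_
  have hsingle : (Pi.single i (b i) : Fin n → ℝ) = b i • (Pi.single i (1:ℝ) : Fin n → ℝ) := by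
    funext j
    by_cases hj : j = i
    · subst hj; simp
    · simp [Pi.single_eq_of_ne hj]
  rw [hsingle, LinearMap.map_smul, smul_eq_mul]


/-- The dot-product functional `z ↦ ∑ i, a i * z i` as a linear map. -/
noncomputable def dotL {n : ℕ} (a : Fin n → ℝ) : (Fin n → ℝ) →ₗ[ℝ] ℝ where
  toFun := fun z => ∑ i, a i * z i
  map_add' := fun u v => by
    rw [← Finset.sum_add_distrib]
    exact Finset.sum_congr rfl fun i _ => by simp [mul_add]
  map_smul' := fun c u => by
    simp only [RingHom.id_apply, smul_eq_mul, Finset.mul_sum]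
    exact Finset.sum_congr rfl fun i _ => by simp [Pi.smul_apply, smul_eq_mul]; ring

lemma dotL_apply {n : ℕ} (a z : Fin n → ℝ) : dotL a z = ∑ i, a i * z i := rfl

/-- The linearization functional of the objective at the point `m`. -/
noncomputable def LfD {n : ℕ} (y : Fin n → ℝ) (lam : ℝ)
    (m : (Fin n → ℝ) × (Fin n → ℝ) × (Fin n → ℝ)) :
    ((Fin n → ℝ) × (Fin n → ℝ) × (Fin n → ℝ)) →ₗ[ℝ] ℝ :=
  (dotL (fun i => y i - m.1 i)).comp (LinearMap.fst ℝ _ _)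
  - (dotL (fun i => lam * m.2.1 i / Real.sqrt ((m.2.1 i)^2 + (m.2.2 i)^2))).comp
      ((LinearMap.fst ℝ _ _).comp (LinearMap.snd ℝ _ _))
  - (dotL (fun i => lam * m.2.2 i / Real.sqrt ((m.2.1 i)^2 + (m.2.2 i)^2))).comp
      ((LinearMap.snd ℝ _ _).comp (LinearMap.snd ℝ _ _))

lemma LfD_apply {n : ℕ} (y : Fin n → ℝ) (lam : ℝ)
    (m p : (Fin n → ℝ) × (Fin n → ℝ) × (Fin n → ℝ)) :
    LfD y lam m p = (∑ i, (y i - m.1 i) * p.1 i)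
      - ∑ i, lam * m.2.1 i / Real.sqrt ((m.2.1 i)^2 + (m.2.2 i)^2) * p.2.1 i
      - ∑ i, lam * m.2.2 i / Real.sqrt ((m.2.1 i)^2 + (m.2.2 i)^2) * p.2.2 i := rfl

lemma LfD_eq {n : ℕ} (y : Fin n → ℝ) (lam : ℝ)
    (m p : (Fin n → ℝ) × (Fin n → ℝ) × (Fin n → ℝ)) :
    LfD y lam m p = (∑ i, (y i - m.1 i) * p.1 i)
      - lam * ∑ i, (m.2.1 i * p.2.1 i + m.2.2 i * p.2.2 i)
          / Real.sqrt ((m.2.1 i)^2 + (m.2.2 i)^2) := by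
  rw [LfD_apply, Finset.mul_sum, sub_sub, ← Finset.sum_add_distrib]
  congr 1
  refine Finset.sum_congr rfl fun i _ => ?_
  by_cases hri : Real.sqrt ((m.2.1 i)^2 + (m.2.2 i)^2) = 0
  · obtain ⟨hv, hw⟩ := (aux_sqrt_eq_zero_iff _ _).1 hri
    rw [hri, hv, hw]; simp
  · field_simp

/-- The sublinear majorant used in the Hahn–Banach step. -/
noncomputable def NfD {n : ℕ} (lam : ℝ) (m p : (Fin n → ℝ) × (Fin n → ℝ) × (Fin n → ℝ)) : ℝ :=
  lam * ∑ i, (if Real.sqrt ((m.2.1 i)^2 + (m.2.2 i)^2) = 0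
    then Real.sqrt ((p.2.1 i)^2 + (p.2.2 i)^2) else 0)

lemma NfD_smul {n : ℕ} (lam : ℝ) (m : (Fin n → ℝ) × (Fin n → ℝ) × (Fin n → ℝ))
    (c : ℝ) (hc : 0 < c) (p : (Fin n → ℝ) × (Fin n → ℝ) × (Fin n → ℝ)) :
    NfD lam m (c • p) = c * NfD lam m p := by
  unfold NfD
  have h : ∀ i ∈ Finset.univ, (if Real.sqrt ((m.2.1 i)^2 + (m.2.2 i)^2) = 0
      then Real.sqrt (((c • p).2.1 i)^2 + ((c • p).2.2 i)^2) else 0)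
      = c * (if Real.sqrt ((m.2.1 i)^2 + (m.2.2 i)^2) = 0
      then Real.sqrt ((p.2.1 i)^2 + (p.2.2 i)^2) else 0) := by
    intro i _
    have h1 : ((c • p).2.1 i) = c * p.2.1 i := rfl
    have h2 : ((c • p).2.2 i) = c * p.2.2 i := rfl
    rw [h1, h2]
    split
    · exact aux_sqrt_smul c _ _ hc.le
    · ring
  rw [Finset.sum_congr rfl h, ← Finset.mul_sum]
  ring

lemma NfD_add {n : ℕ} (lam : ℝ) (hlam : 0 ≤ lam)
    (m p q : (Fin n → ℝ) × (Fin n → ℝ) × (Fin n → ℝ)) :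
    NfD lam m (p + q) ≤ NfD lam m p + NfD lam m q := by
  unfold NfD
  rw [← mul_add, ← Finset.sum_add_distrib]
  refine mul_le_mul_of_nonneg_left (Finset.sum_le_sum fun i _ => ?_) hlam
  have h1 : ((p + q).2.1 i) = p.2.1 i + q.2.1 i := rfl
  have h2 : ((p + q).2.2 i) = p.2.2 i + q.2.2 i := rfl
  rw [h1, h2]
  split
  · exact aux_sqrt_triangle _ _ _ _
  · simp

lemma NfD_eq_zero {n : ℕ} (lam : ℝ) (m p : (Fin n → ℝ) × (Fin n → ℝ) × (Fin n → ℝ))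
    (h : ∀ i, Real.sqrt ((m.2.1 i)^2 + (m.2.2 i)^2) = 0 →
      Real.sqrt ((p.2.1 i)^2 + (p.2.2 i)^2) = 0) :
    NfD lam m p = 0 := by
  unfold NfD
  rw [Finset.sum_eq_zero, mul_zero]
  intro i _
  split
  · exact h i (by assumption)
  · rfl

lemma aux_single_sum {n : ℕ} (q : Fin n → ℝ) (k : Fin n) :
    ∑ j, q j * (Pi.single k (1:ℝ) : Fin n → ℝ) j = q k := by
  rw [Finset.sum_eq_single_of_mem k (Finset.mem_univ k)]
  · simp
  · intro j _ hj
    have : (Pi.single k (1:ℝ) : Fin n → ℝ) j = 0 := Pi.single_eq_of_ne hj 1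
    rw [this, mul_zero]

private lemma exists_min {n : ℕ} (y : Fin n → ℝ) (lam : ℝ) (hlam : 0 < lam)
    (W : Submodule ℝ ((Fin n → ℝ) × (Fin n → ℝ) × (Fin n → ℝ))) :
    ∃ m ∈ W, ∀ p ∈ W,
      (1/2) * ∑ i, (y i - m.1 i)^2 + lam * ∑ i, Real.sqrt ((m.2.1 i)^2 + (m.2.2 i)^2) ≤
      (1/2) * ∑ i, (y i - p.1 i)^2 + lam * ∑ i, Real.sqrt ((p.2.1 i)^2 + (p.2.2 i)^2) := by
  classical
  set g : (Fin n → ℝ) × (Fin n → ℝ) × (Fin n → ℝ) → ℝ := fun p =>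
    (1/2) * ∑ i, (y i - p.1 i)^2 + lam * ∑ i, Real.sqrt ((p.2.1 i)^2 + (p.2.2 i)^2) with hg
  have hgcont : Continuous g := by
    apply Continuous.add
    · exact continuous_const.mul (continuous_finset_sum _ fun i _ => by fun_prop)
    · exact continuous_const.mul (continuous_finset_sum _ fun i _ =>
        (Real.continuous_sqrt.comp (by fun_prop)))
  set c := (1/2) * ∑ i, (y i)^2 with hc
  have hc0 : 0 ≤ c := by positivity
  have hg0 : g 0 = c := by simp [hg, hc]
  set R := 4*c + 2 + c/lam with hR
  have hRge : 4*c + 2 ≤ R := by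
    have : 0 ≤ c / lam := div_nonneg hc0 hlam.le
    rw [hR]; linarith
  have hR0 : 0 < R := by linarith
  have hncompact : IsCompact ((W : Set ((Fin n → ℝ) × (Fin n → ℝ) × (Fin n → ℝ))) ∩ Metric.closedBall 0 R) :=
    IsCompact.inter_left
      (isCompact_closedBall (0 : (Fin n → ℝ) × (Fin n → ℝ) × (Fin n → ℝ)) R)
      (Submodule.closed_of_finiteDimensional W)
  have hne : ((W : Set ((Fin n → ℝ) × (Fin n → ℝ) × (Fin n → ℝ))) ∩ Metric.closedBall 0 R).Nonempty :=
    ⟨0, W.zero_mem, by simp [hR0.le]⟩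
  obtain ⟨m, ⟨hmW, _⟩, hminOn⟩ := hncompact.exists_isMinOn hne hgcont.continuousOn
  have hgm0 : g m ≤ c := by
    have := hminOn ⟨W.zero_mem, by simp [hR0.le]⟩
    simpa [hg0] using this
  refine ⟨m, hmW, fun p hp => ?_⟩
  by_cases hpB : ‖p‖ ≤ R
  · exact hminOn ⟨hp, by simpa [Metric.mem_closedBall, dist_zero_right] using hpB⟩
  · -- coercivity: g p > c
    have hsum1 : (0:ℝ) ≤ ∑ i, Real.sqrt ((p.2.1 i)^2 + (p.2.2 i)^2) :=
      Finset.sum_nonneg fun i _ => Real.sqrt_nonneg _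
    have hsum2 : (0:ℝ) ≤ ∑ i, (y i - p.1 i)^2 := Finset.sum_nonneg fun i _ => sq_nonneg _
    have hcoord : (∃ i, R < |p.1 i|) ∨ (∃ i, R < |p.2.1 i|) ∨ (∃ i, R < |p.2.2 i|) := by
      by_contra hcon
      push_neg at hcon
      apply hpB
      rw [Prod.norm_def, Prod.norm_def]
      refine max_le ((pi_norm_le_iff_of_nonneg hR0.le).2 fun i => ?_)
        (max_le ((pi_norm_le_iff_of_nonneg hR0.le).2 fun i => ?_)
          ((pi_norm_le_iff_of_nonneg hR0.le).2 fun i => ?_))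
      · simpa [Real.norm_eq_abs] using hcon.1 i
      · simpa [Real.norm_eq_abs] using hcon.2.1 i
      · simpa [Real.norm_eq_abs] using hcon.2.2 i
    have hyb : ∀ i, (y i)^2 ≤ 2*c := by
      intro i
      have : (y i)^2 ≤ ∑ j, (y j)^2 :=
        Finset.single_le_sum (fun j _ => sq_nonneg (y j)) (Finset.mem_univ i)
      rw [hc]; linarith
    have hcg : c < g p := by
      rcases hcoord with ⟨i, hi⟩ | ⟨i, hi⟩ | ⟨i, hi⟩
      · have hsq : R^2 < (p.1 i)^2 := by
          nlinarith [abs_nonneg (p.1 i), sq_abs (p.1 i)]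
        have hterm : (y i - p.1 i)^2 ≤ ∑ j, (y j - p.1 j)^2 :=
          Finset.single_le_sum (f := fun j => (y j - p.1 j)^2) (fun j _ => sq_nonneg _)
            (Finset.mem_univ i)
        have hR2 : (4*c+2)^2 ≤ R^2 := by nlinarith
        have h2c : 2*c < (y i - p.1 i)^2 := by
          nlinarith [sq_nonneg (p.1 i - 2*y i), hyb i]
        have : c < (1/2) * ∑ j, (y j - p.1 j)^2 := by linarith
        have hl : 0 ≤ lam * ∑ i, Real.sqrt ((p.2.1 i)^2 + (p.2.2 i)^2) :=
          mul_nonneg hlam.le hsum1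
        rw [hg]; dsimp only; linarith
      · have habs : |p.2.1 i| ≤ Real.sqrt ((p.2.1 i)^2 + (p.2.2 i)^2) := by
          rw [← Real.sqrt_sq_eq_abs]
          exact Real.sqrt_le_sqrt (by nlinarith [sq_nonneg (p.2.2 i)])
        have hterm : Real.sqrt ((p.2.1 i)^2 + (p.2.2 i)^2) ≤
            ∑ j, Real.sqrt ((p.2.1 j)^2 + (p.2.2 j)^2) :=
          Finset.single_le_sum (f := fun j => Real.sqrt ((p.2.1 j)^2 + (p.2.2 j)^2))
            (fun j _ => Real.sqrt_nonneg _) (Finset.mem_univ i)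
        have hRgt : c/lam < Real.sqrt ((p.2.1 i)^2 + (p.2.2 i)^2) := by
          have : c/lam ≤ R := by linarith
          linarith [lt_of_le_of_lt this (lt_of_lt_of_le hi habs)]
        have : c < lam * ∑ j, Real.sqrt ((p.2.1 j)^2 + (p.2.2 j)^2) := by
          have h1 : lam * (c/lam) < lam * ∑ j, Real.sqrt ((p.2.1 j)^2 + (p.2.2 j)^2) :=
            mul_lt_mul_of_pos_left (lt_of_lt_of_le hRgt hterm) hlam
          rwa [mul_div_cancel₀ c hlam.ne'] at h1
        rw [hg]; dsimp only; linarith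
      · have habs : |p.2.2 i| ≤ Real.sqrt ((p.2.1 i)^2 + (p.2.2 i)^2) := by
          rw [← Real.sqrt_sq_eq_abs]
          exact Real.sqrt_le_sqrt (by nlinarith [sq_nonneg (p.2.1 i)])
        have hterm : Real.sqrt ((p.2.1 i)^2 + (p.2.2 i)^2) ≤
            ∑ j, Real.sqrt ((p.2.1 j)^2 + (p.2.2 j)^2) :=
          Finset.single_le_sum (f := fun j => Real.sqrt ((p.2.1 j)^2 + (p.2.2 j)^2))
            (fun j _ => Real.sqrt_nonneg _) (Finset.mem_univ i)
        have hRgt : c/lam < Real.sqrt ((p.2.1 i)^2 + (p.2.2 i)^2) := by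
          have : c/lam ≤ R := by linarith
          linarith [lt_of_le_of_lt this (lt_of_lt_of_le hi habs)]
        have : c < lam * ∑ j, Real.sqrt ((p.2.1 j)^2 + (p.2.2 j)^2) := by
          have h1 : lam * (c/lam) < lam * ∑ j, Real.sqrt ((p.2.1 j)^2 + (p.2.2 j)^2) :=
            mul_lt_mul_of_pos_left (lt_of_lt_of_le hRgt hterm) hlam
          rwa [mul_div_cancel₀ c hlam.ne'] at h1
        rw [hg]; dsimp only; linarith
    simpa only [hg] using le_of_lt (lt_of_le_of_lt hgm0 hcg)

private lemma key_ineq {n : ℕ} (y : Fin n → ℝ) (lam : ℝ) (hlam : 0 < lam)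
    (W : Submodule ℝ ((Fin n → ℝ) × (Fin n → ℝ) × (Fin n → ℝ)))
    (m : (Fin n → ℝ) × (Fin n → ℝ) × (Fin n → ℝ)) (hmW : m ∈ W)
    (hmin : ∀ p ∈ W,
      (1/2) * ∑ i, (y i - m.1 i)^2 + lam * ∑ i, Real.sqrt ((m.2.1 i)^2 + (m.2.2 i)^2) ≤
      (1/2) * ∑ i, (y i - p.1 i)^2 + lam * ∑ i, Real.sqrt ((p.2.1 i)^2 + (p.2.2 i)^2))
    (p : (Fin n → ℝ) × (Fin n → ℝ) × (Fin n → ℝ)) (hp : p ∈ W) :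
    (∑ i, (y i - m.1 i) * p.1 i)
      - lam * ∑ i, (m.2.1 i * p.2.1 i + m.2.2 i * p.2.2 i)
          / Real.sqrt ((m.2.1 i)^2 + (m.2.2 i)^2)
    ≤ lam * ∑ i, (if Real.sqrt ((m.2.1 i)^2 + (m.2.2 i)^2) = 0
        then Real.sqrt ((p.2.1 i)^2 + (p.2.2 i)^2) else 0) := by
  classical
  have hC0 : (0:ℝ) ≤ (1/2) * ∑ i, (p.1 i)^2
      + lam * ∑ i, ((p.2.1 i)^2 + (p.2.2 i)^2)
          / (2 * Real.sqrt ((m.2.1 i)^2 + (m.2.2 i)^2)) := by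
    apply add_nonneg
    · positivity
    · refine mul_nonneg hlam.le (Finset.sum_nonneg fun i _ => ?_)
      have h1 : (0:ℝ) ≤ Real.sqrt ((m.2.1 i)^2 + (m.2.2 i)^2) := Real.sqrt_nonneg _
      positivity
  rw [← sub_nonneg]
  refine aux_small_t _ _ hC0 (fun t ht0 ht1 => ?_)
  have hmem : m + t • p ∈ W := W.add_mem hmW (W.smul_mem t hp)
  have hineq : (1/2) * ∑ i, (y i - m.1 i)^2
        + lam * ∑ i, Real.sqrt ((m.2.1 i)^2 + (m.2.2 i)^2)
      ≤ (1/2) * ∑ i, (y i - (m.1 i + t * p.1 i))^2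
        + lam * ∑ i, Real.sqrt ((m.2.1 i + t * p.2.1 i)^2 + (m.2.2 i + t * p.2.2 i)^2) :=
    hmin _ hmem
  have hquad : ∑ i, (y i - (m.1 i + t * p.1 i))^2
      = ∑ i, (y i - m.1 i)^2 - 2*t*(∑ i, (y i - m.1 i) * p.1 i) + t^2 * ∑ i, (p.1 i)^2 := by
    have hterm : ∀ i ∈ Finset.univ, (y i - (m.1 i + t * p.1 i))^2
        = ((y i - m.1 i)^2 - 2*t*((y i - m.1 i) * p.1 i)) + t^2 * (p.1 i)^2 :=
      fun i _ => by ring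
    rw [Finset.sum_congr rfl hterm, Finset.sum_add_distrib, Finset.sum_sub_distrib,
      ← Finset.mul_sum, ← Finset.mul_sum]
  have hsqrt : ∀ i ∈ Finset.univ,
      Real.sqrt ((m.2.1 i + t * p.2.1 i)^2 + (m.2.2 i + t * p.2.2 i)^2)
      ≤ Real.sqrt ((m.2.1 i)^2 + (m.2.2 i)^2)
        + t * ((m.2.1 i * p.2.1 i + m.2.2 i * p.2.2 i)
            / Real.sqrt ((m.2.1 i)^2 + (m.2.2 i)^2))
        + t^2 * (((p.2.1 i)^2 + (p.2.2 i)^2)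
            / (2 * Real.sqrt ((m.2.1 i)^2 + (m.2.2 i)^2)))
        + t * (if Real.sqrt ((m.2.1 i)^2 + (m.2.2 i)^2) = 0
            then Real.sqrt ((p.2.1 i)^2 + (p.2.2 i)^2) else 0) := by
    intro i _
    by_cases hri : Real.sqrt ((m.2.1 i)^2 + (m.2.2 i)^2) = 0
    · obtain ⟨hv, hw⟩ := (aux_sqrt_eq_zero_iff _ _).1 hri
      rw [if_pos hri, hri, hv, hw]
      rw [show (0 + t * p.2.1 i)^2 + (0 + t * p.2.2 i)^2 = (t * p.2.1 i)^2 + (t * p.2.2 i)^2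
        by ring]
      rw [aux_sqrt_smul t _ _ ht0.le]
      simp
    · rw [if_neg hri, mul_zero, add_zero]
      have hconc := aux_concave (m.2.1 i) (m.2.2 i) (t * p.2.1 i) (t * p.2.2 i) hri
      have heq : Real.sqrt ((m.2.1 i)^2 + (m.2.2 i)^2)
            + (2*(m.2.1 i*(t*p.2.1 i) + m.2.2 i*(t*p.2.2 i))
                + ((t*p.2.1 i)^2 + (t*p.2.2 i)^2)) / (2*Real.sqrt ((m.2.1 i)^2 + (m.2.2 i)^2))
          = Real.sqrt ((m.2.1 i)^2 + (m.2.2 i)^2)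
            + t * ((m.2.1 i * p.2.1 i + m.2.2 i * p.2.2 i)
                / Real.sqrt ((m.2.1 i)^2 + (m.2.2 i)^2))
            + t^2 * (((p.2.1 i)^2 + (p.2.2 i)^2)
                / (2 * Real.sqrt ((m.2.1 i)^2 + (m.2.2 i)^2))) := by
        have hs2 : Real.sqrt ((m.2.1 i)^2 + (m.2.2 i)^2)^2 = (m.2.1 i)^2 + (m.2.2 i)^2 :=
          Real.sq_sqrt (by positivity)
        field_simp
        linear_combination
      rw [← heq]
      exact hconc
  have hs : ∑ i, Real.sqrt ((m.2.1 i + t * p.2.1 i)^2 + (m.2.2 i + t * p.2.2 i)^2)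
      ≤ ∑ i, Real.sqrt ((m.2.1 i)^2 + (m.2.2 i)^2)
        + t * ∑ i, ((m.2.1 i * p.2.1 i + m.2.2 i * p.2.2 i)
            / Real.sqrt ((m.2.1 i)^2 + (m.2.2 i)^2))
        + t^2 * ∑ i, (((p.2.1 i)^2 + (p.2.2 i)^2)
            / (2 * Real.sqrt ((m.2.1 i)^2 + (m.2.2 i)^2)))
        + t * ∑ i, (if Real.sqrt ((m.2.1 i)^2 + (m.2.2 i)^2) = 0
            then Real.sqrt ((p.2.1 i)^2 + (p.2.2 i)^2) else 0) := by
    calc ∑ i, Real.sqrt ((m.2.1 i + t * p.2.1 i)^2 + (m.2.2 i + t * p.2.2 i)^2)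
        ≤ _ := Finset.sum_le_sum hsqrt
      _ = _ := by
          rw [Finset.sum_add_distrib, Finset.sum_add_distrib, Finset.sum_add_distrib,
            ← Finset.mul_sum, ← Finset.mul_sum, ← Finset.mul_sum]
  have hlam' := mul_le_mul_of_nonneg_left hs hlam.le
  rw [hquad] at hineq
  nlinarith [hineq, hlam']

/-- Proposition 1 (strong duality): for every binary vector τ ∈ {0,1}^n, the primal
optimal value of the τ-restricted TV deconvolution problem equals the dual optimal value. -/
theorem mptv_strong_duality (n : ℕ) (hn : 1 ≤ n) (y : Fin n → ℝ)
    (A Dv Dh : Matrix (Fin n) (Fin n) ℝ) (lam : ℝ) (hlam : 0 < lam)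
    (τ : Fin n → ℝ) (hτ : ∀ i, τ i = 0 ∨ τ i = 1) :
    sInf ((fun x : Fin n → ℝ =>
        (((1 / 2) * ∑ i, (y i - A.mulVec x i) ^ 2
          + lam * ∑ i, Real.sqrt ((Dv.mulVec x i) ^ 2 + (Dh.mulVec x i) ^ 2) : ℝ) : EReal)) ''
      {x : Fin n → ℝ | ∀ i, τ i = 0 → Dv.mulVec x i = 0 ∧ Dh.mulVec x i = 0})
    = sSup ((fun p : (Fin n → ℝ) × (Fin n → ℝ) × (Fin n → ℝ) =>
        ((-(1 / 2) * ∑ i, (p.1 i) ^ 2 + ∑ i, p.1 i * y i : ℝ) : EReal)) ''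
      {p : (Fin n → ℝ) × (Fin n → ℝ) × (Fin n → ℝ) |
        Aᵀ.mulVec p.1 = Dvᵀ.mulVec p.2.1 + Dhᵀ.mulVec p.2.2
        ∧ ∀ i, τ i = 1 → Real.sqrt ((p.2.1 i) ^ 2 + (p.2.2 i) ^ 2) ≤ lam}) := by
  classical
  -- the feasible subspace
  let V : Submodule ℝ (Fin n → ℝ) :=
    { carrier := {x : Fin n → ℝ | ∀ i, τ i = 0 → Dv.mulVec x i = 0 ∧ Dh.mulVec x i = 0}
      add_mem' := by
        intro a b ha hb i hi
        constructor <;>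
          simp [Matrix.mulVec_add, (ha i hi).1, (ha i hi).2, (hb i hi).1, (hb i hi).2]
      zero_mem' := by intro i _; simp
      smul_mem' := by
        intro c a ha i hi
        constructor <;> simp [Matrix.mulVec_smul, (ha i hi).1, (ha i hi).2] }
  let T : (Fin n → ℝ) →ₗ[ℝ] (Fin n → ℝ) × (Fin n → ℝ) × (Fin n → ℝ) :=
    LinearMap.prod A.mulVecLin (LinearMap.prod Dv.mulVecLin Dh.mulVecLin)
  have hT : ∀ x, T x = (A.mulVec x, Dv.mulVec x, Dh.mulVec x) := fun x => rfl
  obtain ⟨m, hmW, hmin⟩ := exists_min y lam hlam (V.map T)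
  obtain ⟨xs, hxsV, hTxs⟩ := hmW
  have hmW : m ∈ V.map T := ⟨xs, hxsV, hTxs⟩
  have hm1 : m.1 = A.mulVec xs := by rw [← hTxs]; rfl
  have hm21 : m.2.1 = Dv.mulVec xs := by rw [← hTxs]; rfl
  have hm22 : m.2.2 = Dh.mulVec xs := by rw [← hTxs]; rfl
  -- complementary slackness
  have hDr : ∀ i ∈ Finset.univ, (m.2.1 i * m.2.1 i + m.2.2 i * m.2.2 i)
      / Real.sqrt ((m.2.1 i)^2 + (m.2.2 i)^2) = Real.sqrt ((m.2.1 i)^2 + (m.2.2 i)^2) := by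
    intro i _
    by_cases hri : Real.sqrt ((m.2.1 i)^2 + (m.2.2 i)^2) = 0
    · obtain ⟨hv, hw⟩ := (aux_sqrt_eq_zero_iff _ _).1 hri
      rw [hri, hv, hw]; simp
    · have hr2 : Real.sqrt ((m.2.1 i)^2 + (m.2.2 i)^2)^2 = (m.2.1 i)^2 + (m.2.2 i)^2 :=
        Real.sq_sqrt (by positivity)
      rw [div_eq_iff hri]; linear_combination -hr2
  have hN0 : ∀ (bv bh : Fin n → ℝ), (∀ i, Real.sqrt ((m.2.1 i)^2 + (m.2.2 i)^2) = 0 →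
        Real.sqrt ((bv i)^2 + (bh i)^2) = 0) →
      ∑ i, (if Real.sqrt ((m.2.1 i)^2 + (m.2.2 i)^2) = 0
        then Real.sqrt ((bv i)^2 + (bh i)^2) else 0) = 0 := by
    intro bv bh h
    refine Finset.sum_eq_zero fun i _ => ?_
    split
    · exact h i (by assumption)
    · rfl
  have hcs : ∑ i, (y i - m.1 i) * m.1 i
      = lam * ∑ i, Real.sqrt ((m.2.1 i)^2 + (m.2.2 i)^2) := by
    have h1 := key_ineq y lam hlam (V.map T) m hmW hmin m hmW
    have h2 : (∑ i, (y i - m.1 i) * (-(m.1 i)))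
        - lam * ∑ i, (m.2.1 i * (-(m.2.1 i)) + m.2.2 i * (-(m.2.2 i)))
            / Real.sqrt ((m.2.1 i)^2 + (m.2.2 i)^2)
        ≤ lam * ∑ i, (if Real.sqrt ((m.2.1 i)^2 + (m.2.2 i)^2) = 0
            then Real.sqrt ((-(m.2.1 i))^2 + (-(m.2.2 i))^2) else 0) :=
      key_ineq y lam hlam (V.map T) m hmW hmin (-m) (neg_mem hmW)
    rw [Finset.sum_congr rfl hDr] at h1
    rw [hN0 m.2.1 m.2.2 (fun i h => h)] at h1
    have e2a : ∑ i, (y i - m.1 i) * (-(m.1 i)) = -∑ i, (y i - m.1 i) * m.1 i := by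
      rw [← Finset.sum_neg_distrib]
      exact Finset.sum_congr rfl fun i _ => by ring
    have e2b : ∑ i, (m.2.1 i * (-(m.2.1 i)) + m.2.2 i * (-(m.2.2 i)))
          / Real.sqrt ((m.2.1 i)^2 + (m.2.2 i)^2)
        = -∑ i, Real.sqrt ((m.2.1 i)^2 + (m.2.2 i)^2) := by
      rw [← Finset.sum_neg_distrib]
      refine Finset.sum_congr rfl fun i hi => ?_
      rw [show m.2.1 i * (-(m.2.1 i)) + m.2.2 i * (-(m.2.2 i))
        = -(m.2.1 i * m.2.1 i + m.2.2 i * m.2.2 i) by ring, neg_div, hDr i hi]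
    have e2c : ∑ i, (if Real.sqrt ((m.2.1 i)^2 + (m.2.2 i)^2) = 0
        then Real.sqrt ((-(m.2.1 i))^2 + (-(m.2.2 i))^2) else 0) = 0 := by
      refine hN0 _ _ fun i h => ?_
      obtain ⟨hv, hw⟩ := (aux_sqrt_eq_zero_iff _ _).1 h
      rw [hv, hw]; simp
    rw [e2a, e2b, e2c] at h2
    simp only [mul_zero] at h1 h2
    linarith
  -- Hahn–Banach extension of the linearization from the feasible subspace
  obtain ⟨gl, hgl_eq, hgl_le⟩ := exists_extension_of_le_sublinear
    ⟨V.map T, (LfD y lam m).comp (V.map T).subtype⟩ (NfD lam m)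
    (fun c hc p => NfD_smul lam m c hc p)
    (fun p q => NfD_add lam hlam.le m p q)
    (fun x => by
      show LfD y lam m x.1 ≤ NfD lam m x.1
      rw [LfD_eq]
      exact key_ineq y lam hlam (V.map T) m hmW hmin x.1 x.2)
  -- coefficients of the extension
  obtain ⟨γv, hγv⟩ : ∃ γv : Fin n → ℝ,
      ∀ i, γv i = gl (0, (Pi.single i (1:ℝ) : Fin n → ℝ), 0) := ⟨_, fun i => rfl⟩
  obtain ⟨γh, hγh⟩ : ∃ γh : Fin n → ℝ,
      ∀ i, γh i = gl (0, 0, (Pi.single i (1:ℝ) : Fin n → ℝ)) := ⟨_, fun i => rfl⟩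
  have hgl0 : ∀ a : Fin n → ℝ, gl (a, 0, 0) = 0 := by
    intro a
    have h1 : gl (a, 0, 0) ≤ 0 := by
      have h := hgl_le (a, 0, 0)
      rwa [NfD_eq_zero lam m _ (fun i _ => by simp)] at h
    have h2 : gl (-(a, (0 : Fin n → ℝ), (0 : Fin n → ℝ))) ≤ 0 := by
      have h := hgl_le (-(a, (0 : Fin n → ℝ), (0 : Fin n → ℝ)))
      rwa [NfD_eq_zero lam m _ (fun i _ => by simp)] at h
    rw [map_neg] at h2
    linarith
  have hγ_ne : ∀ i, Real.sqrt ((m.2.1 i)^2 + (m.2.2 i)^2) ≠ 0 → γv i = 0 ∧ γh i = 0 := by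
    intro i hri
    constructor
    · have h1 : gl (0, (Pi.single i (1:ℝ) : Fin n → ℝ), 0) ≤ 0 := by
        have h := hgl_le ((0 : Fin n → ℝ), (Pi.single i (1:ℝ) : Fin n → ℝ), (0 : Fin n → ℝ))
        rwa [NfD_eq_zero lam m _ ?_] at h
        intro j hj
        by_cases hij : j = i
        · subst hij; exact absurd hj hri
        · have : (Pi.single i (1:ℝ) : Fin n → ℝ) j = 0 := Pi.single_eq_of_ne hij 1
          show Real.sqrt (((Pi.single i (1:ℝ) : Fin n → ℝ) j)^2 + ((0 : Fin n → ℝ) j)^2) = 0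
          rw [this]; simp
      have h2 : gl (-((0 : Fin n → ℝ), (Pi.single i (1:ℝ) : Fin n → ℝ), (0 : Fin n → ℝ))) ≤ 0 := by
        have h := hgl_le (-((0 : Fin n → ℝ), (Pi.single i (1:ℝ) : Fin n → ℝ), (0 : Fin n → ℝ)))
        rwa [NfD_eq_zero lam m _ ?_] at h
        intro j hj
        by_cases hij : j = i
        · subst hij; exact absurd hj hri
        · have : (Pi.single i (1:ℝ) : Fin n → ℝ) j = 0 := Pi.single_eq_of_ne hij 1
          show Real.sqrt ((-(Pi.single i (1:ℝ) : Fin n → ℝ) j)^2 + (-(0 : Fin n → ℝ) j)^2) = 0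
          rw [this]; simp
      rw [map_neg] at h2
      rw [hγv]
      linarith
    · have h1 : gl (0, 0, (Pi.single i (1:ℝ) : Fin n → ℝ)) ≤ 0 := by
        have h := hgl_le ((0 : Fin n → ℝ), (0 : Fin n → ℝ), (Pi.single i (1:ℝ) : Fin n → ℝ))
        rwa [NfD_eq_zero lam m _ ?_] at h
        intro j hj
        by_cases hij : j = i
        · subst hij; exact absurd hj hri
        · have : (Pi.single i (1:ℝ) : Fin n → ℝ) j = 0 := Pi.single_eq_of_ne hij 1
          show Real.sqrt (((0 : Fin n → ℝ) j)^2 + ((Pi.single i (1:ℝ) : Fin n → ℝ) j)^2) = 0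
          rw [this]; simp
      have h2 : gl (-((0 : Fin n → ℝ), (0 : Fin n → ℝ), (Pi.single i (1:ℝ) : Fin n → ℝ))) ≤ 0 := by
        have h := hgl_le (-((0 : Fin n → ℝ), (0 : Fin n → ℝ), (Pi.single i (1:ℝ) : Fin n → ℝ)))
        rwa [NfD_eq_zero lam m _ ?_] at h
        intro j hj
        by_cases hij : j = i
        · subst hij; exact absurd hj hri
        · have : (Pi.single i (1:ℝ) : Fin n → ℝ) j = 0 := Pi.single_eq_of_ne hij 1
          show Real.sqrt ((-(0 : Fin n → ℝ) j)^2 + (-(Pi.single i (1:ℝ) : Fin n → ℝ) j)^2) = 0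
          rw [this]; simp
      rw [map_neg] at h2
      rw [hγh]
      linarith
  -- decomposition of the extension
  have hdecomp : ∀ p : (Fin n → ℝ) × (Fin n → ℝ) × (Fin n → ℝ),
      gl p = ∑ i, p.2.1 i * γv i + ∑ i, p.2.2 i * γh i := by
    intro p
    have hsplit : p = ((p.1, 0, 0) : (Fin n → ℝ) × (Fin n → ℝ) × (Fin n → ℝ))
        + ((0, p.2.1, 0) + (0, 0, p.2.2)) := by
      refine Prod.ext ?_ (Prod.ext ?_ ?_) <;> simp
    rw [show gl p = gl (((p.1, 0, 0) : (Fin n → ℝ) × (Fin n → ℝ) × (Fin n → ℝ))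
        + ((0, p.2.1, 0) + (0, 0, p.2.2))) from by rw [← hsplit], map_add, map_add, hgl0]
    have hmid : gl (0, p.2.1, 0) = ∑ i, p.2.1 i * γv i := by
      have h := aux_functional
        (gl.comp (LinearMap.prod 0 (LinearMap.prod LinearMap.id 0))) p.2.1
      have e0 : ∀ b : Fin n → ℝ,
          (gl.comp (LinearMap.prod 0 (LinearMap.prod LinearMap.id 0))) b
            = gl (0, b, 0) := fun b => rfl
      rw [e0] at h
      rw [h]
      exact Finset.sum_congr rfl fun i _ => by rw [e0, hγv]
    have hlast : gl (0, 0, p.2.2) = ∑ i, p.2.2 i * γh i := by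
      have h := aux_functional
        (gl.comp (LinearMap.prod 0 (LinearMap.prod 0 LinearMap.id))) p.2.2
      have e0 : ∀ b : Fin n → ℝ,
          (gl.comp (LinearMap.prod 0 (LinearMap.prod 0 LinearMap.id))) b
            = gl (0, 0, b) := fun b => rfl
      rw [e0] at h
      rw [h]
      exact Finset.sum_congr rfl fun i _ => by rw [e0, hγh]
    rw [hmid, hlast]; ring
  -- the norm bound for the γ's on degenerate coordinates
  have hγbound : ∀ i, Real.sqrt ((m.2.1 i)^2 + (m.2.2 i)^2) = 0 →
      Real.sqrt ((γv i)^2 + (γh i)^2) ≤ lam := by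
    intro i hri
    have happ := hgl_le (0, (Pi.single i (γv i) : Fin n → ℝ), (Pi.single i (γh i) : Fin n → ℝ))
    have hNval : NfD lam m (0, (Pi.single i (γv i) : Fin n → ℝ), (Pi.single i (γh i) : Fin n → ℝ))
        = lam * Real.sqrt ((γv i)^2 + (γh i)^2) := by
      unfold NfD
      congr 1
      rw [Finset.sum_eq_single_of_mem i (Finset.mem_univ i)]
      · rw [if_pos hri]
        simp
      · intro j _ hj
        have e1 : (Pi.single i (γv i) : Fin n → ℝ) j = 0 := Pi.single_eq_of_ne hj _
        have e2 : (Pi.single i (γh i) : Fin n → ℝ) j = 0 := Pi.single_eq_of_ne hj _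
        show (if Real.sqrt ((m.2.1 j)^2 + (m.2.2 j)^2) = 0
          then Real.sqrt (((Pi.single i (γv i) : Fin n → ℝ) j)^2
            + ((Pi.single i (γh i) : Fin n → ℝ) j)^2) else 0) = 0
        rw [e1, e2]
        split <;> simp
    have hglval : gl (0, (Pi.single i (γv i) : Fin n → ℝ), (Pi.single i (γh i) : Fin n → ℝ))
        = (γv i)^2 + (γh i)^2 := by
      rw [hdecomp]
      have e1 : ∑ j, (Pi.single i (γv i) : Fin n → ℝ) j * γv j = γv i * γv i := by
        rw [Finset.sum_eq_single_of_mem i (Finset.mem_univ i)]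
        · simp
        · intro j _ hj
          rw [show (Pi.single i (γv i) : Fin n → ℝ) j = 0 from Pi.single_eq_of_ne hj _, zero_mul]
      have e2 : ∑ j, (Pi.single i (γh i) : Fin n → ℝ) j * γh j = γh i * γh i := by
        rw [Finset.sum_eq_single_of_mem i (Finset.mem_univ i)]
        · simp
        · intro j _ hj
          rw [show (Pi.single i (γh i) : Fin n → ℝ) j = 0 from Pi.single_eq_of_ne hj _, zero_mul]
      rw [e1, e2]; ring
    rw [hglval, hNval] at happ
    have hs := Real.sq_sqrt (show (0:ℝ) ≤ (γv i)^2 + (γh i)^2 by positivity)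
    rcases eq_or_lt_of_le (Real.sqrt_nonneg ((γv i)^2 + (γh i)^2)) with h0 | h0
    · rw [← h0]; exact hlam.le
    · nlinarith [hs, happ]
  -- the dual multipliers on the active coordinates
  obtain ⟨βv, hβv⟩ : ∃ βv : Fin n → ℝ, ∀ i, βv i
      = lam * m.2.1 i / Real.sqrt ((m.2.1 i)^2 + (m.2.2 i)^2) + γv i := ⟨_, fun i => rfl⟩
  obtain ⟨βh, hβh⟩ : ∃ βh : Fin n → ℝ, ∀ i, βh i
      = lam * m.2.2 i / Real.sqrt ((m.2.1 i)^2 + (m.2.2 i)^2) + γh i := ⟨_, fun i => rfl⟩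
  have hβbound : ∀ i, Real.sqrt ((βv i)^2 + (βh i)^2) ≤ lam := by
    intro i
    by_cases hri : Real.sqrt ((m.2.1 i)^2 + (m.2.2 i)^2) = 0
    · obtain ⟨hv, hw⟩ := (aux_sqrt_eq_zero_iff _ _).1 hri
      rw [hβv, hβh, hv, hw]
      simp only [mul_zero, zero_div, zero_add]
      exact hγbound i hri
    · obtain ⟨hγ1, hγ2⟩ := hγ_ne i hri
      rw [hβv, hβh, hγ1, hγ2, add_zero, add_zero]
      have hr2 : Real.sqrt ((m.2.1 i)^2 + (m.2.2 i)^2)^2 = (m.2.1 i)^2 + (m.2.2 i)^2 :=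
        Real.sq_sqrt (by positivity)
      have hne0 : (m.2.1 i)^2 + (m.2.2 i)^2 ≠ 0 :=
        fun hz => hri (by rw [hz, Real.sqrt_zero])
      have hval : (lam * m.2.1 i / Real.sqrt ((m.2.1 i)^2 + (m.2.2 i)^2))^2
          + (lam * m.2.2 i / Real.sqrt ((m.2.1 i)^2 + (m.2.2 i)^2))^2 = lam^2 := by
        rw [div_pow, div_pow, ← add_div, hr2,
          show (lam * m.2.1 i)^2 + (lam * m.2.2 i)^2
            = lam^2 * ((m.2.1 i)^2 + (m.2.2 i)^2) from by ring,
          mul_div_assoc, div_self hne0, mul_one]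
      rw [hval, Real.sqrt_sq hlam.le]
  -- the equality constraint on the feasible subspace
  have hVrestrict : ∀ z, z ∈ V → ∑ i, (y i - m.1 i) * A.mulVec z i
      = ∑ i, (βv i * Dv.mulVec z i + βh i * Dh.mulVec z i) := by
    intro z hz
    have hTz : T z ∈ V.map T := ⟨z, hz, rfl⟩
    have h1 : gl (T z) = LfD y lam m (T z) := hgl_eq ⟨T z, hTz⟩
    rw [hT z] at h1
    rw [hdecomp, LfD_eq] at h1
    dsimp only at h1
    have hexp : ∑ i, (βv i * Dv.mulVec z i + βh i * Dh.mulVec z i)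
        = ∑ i, (lam * m.2.1 i / Real.sqrt ((m.2.1 i)^2 + (m.2.2 i)^2) * Dv.mulVec z i
              + lam * m.2.2 i / Real.sqrt ((m.2.1 i)^2 + (m.2.2 i)^2) * Dh.mulVec z i)
          + (∑ i, Dv.mulVec z i * γv i + ∑ i, Dh.mulVec z i * γh i) := by
      have step1 : ∑ i, (βv i * Dv.mulVec z i + βh i * Dh.mulVec z i)
          = ∑ i, ((lam * m.2.1 i / Real.sqrt ((m.2.1 i)^2 + (m.2.2 i)^2) * Dv.mulVec z i
              + lam * m.2.2 i / Real.sqrt ((m.2.1 i)^2 + (m.2.2 i)^2) * Dh.mulVec z i)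
            + (Dv.mulVec z i * γv i + Dh.mulVec z i * γh i)) := by
        refine Finset.sum_congr rfl fun i _ => ?_
        rw [hβv, hβh]; ring
      rw [step1, Finset.sum_add_distrib, Finset.sum_add_distrib]
      congr 1
      exact Finset.sum_add_distrib
    have hdiv : lam * ∑ i, (m.2.1 i * Dv.mulVec z i + m.2.2 i * Dh.mulVec z i)
          / Real.sqrt ((m.2.1 i)^2 + (m.2.2 i)^2)
        = ∑ i, (lam * m.2.1 i / Real.sqrt ((m.2.1 i)^2 + (m.2.2 i)^2) * Dv.mulVec z i
              + lam * m.2.2 i / Real.sqrt ((m.2.1 i)^2 + (m.2.2 i)^2) * Dh.mulVec z i) := by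
      rw [Finset.mul_sum]
      refine Finset.sum_congr rfl fun i _ => ?_
      by_cases hri : Real.sqrt ((m.2.1 i)^2 + (m.2.2 i)^2) = 0
      · obtain ⟨hv, hw⟩ := (aux_sqrt_eq_zero_iff _ _).1 hri
        rw [hri, hv, hw]; simp
      · field_simp
    rw [hexp, ← hdiv]
    linarith [h1]
  -- span argument to correct the multipliers on inactive coordinates
  obtain ⟨K, hK⟩ : ∃ K : (Fin n → ℝ) →ₗ[ℝ] ℝ, ∀ z,
      K z = ∑ i, (y i - m.1 i) * A.mulVec z i
        - ∑ i, βv i * Dv.mulVec z i - ∑ i, βh i * Dh.mulVec z i :=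
    ⟨(dotL (fun i => y i - m.1 i)).comp A.mulVecLin
      - (dotL βv).comp Dv.mulVecLin - (dotL βh).comp Dh.mulVecLin, fun z => rfl⟩
  obtain ⟨Lfam, hLfam1, hLfam2⟩ : ∃ Lfam : (Fin n ⊕ Fin n) → ((Fin n → ℝ) →ₗ[ℝ] ℝ),
      (∀ i, Lfam (Sum.inl i) = if τ i = 0 then (LinearMap.proj i).comp Dv.mulVecLin else 0)
      ∧ (∀ i, Lfam (Sum.inr i) = if τ i = 0 then (LinearMap.proj i).comp Dh.mulVecLin else 0) :=
    ⟨Sum.elim (fun i => if τ i = 0 then (LinearMap.proj i).comp Dv.mulVecLin else 0)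
      (fun i => if τ i = 0 then (LinearMap.proj i).comp Dh.mulVecLin else 0),
      fun i => rfl, fun i => rfl⟩
  have hker : ⨅ j, LinearMap.ker (Lfam j) ≤ LinearMap.ker K := by
    intro z hz
    rw [Submodule.mem_iInf] at hz
    have hzV : z ∈ V := by
      intro i hi
      constructor
      · have h := hz (Sum.inl i)
        rw [LinearMap.mem_ker, hLfam1 i, if_pos hi] at h
        exact h
      · have h := hz (Sum.inr i)
        rw [LinearMap.mem_ker, hLfam2 i, if_pos hi] at h
        exact h
    rw [LinearMap.mem_ker, hK]
    have h6 := hVrestrict z hzV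
    rw [Finset.sum_add_distrib] at h6
    linarith
  have hspan := mem_span_of_iInf_ker_le_ker hker
  rw [Submodule.mem_span_range_iff_exists_fun] at hspan
  obtain ⟨cc, hcc⟩ := hspan
  obtain ⟨δv, hδv⟩ : ∃ δv : Fin n → ℝ, ∀ i,
      δv i = if τ i = 0 then cc (Sum.inl i) else 0 := ⟨_, fun i => rfl⟩
  obtain ⟨δh, hδh⟩ : ∃ δh : Fin n → ℝ, ∀ i,
      δh i = if τ i = 0 then cc (Sum.inr i) else 0 := ⟨_, fun i => rfl⟩
  have hF8 : ∀ z, K z = ∑ i, δv i * Dv.mulVec z i + ∑ i, δh i * Dh.mulVec z i := by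
    intro z
    have h := congrArg (fun f : (Fin n → ℝ) →ₗ[ℝ] ℝ => f z) hcc
    simp only [LinearMap.coe_sum, Finset.sum_apply, LinearMap.smul_apply, smul_eq_mul] at h
    rw [← h, Fintype.sum_sum_type]
    congr 1
    · refine Finset.sum_congr rfl fun i _ => ?_
      rw [hLfam1 i, hδv i]
      by_cases hi : τ i = 0
      · rw [if_pos hi, if_pos hi]
        rfl
      · rw [if_neg hi, if_neg hi]
        simp
    · refine Finset.sum_congr rfl fun i _ => ?_
      rw [hLfam2 i, hδh i]
      by_cases hi : τ i = 0
      · rw [if_pos hi, if_pos hi]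
        rfl
      · rw [if_neg hi, if_neg hi]
        simp
  -- the final dual certificate
  obtain ⟨Bv, hBv⟩ : ∃ Bv : Fin n → ℝ, ∀ i, Bv i = βv i + δv i := ⟨_, fun i => rfl⟩
  obtain ⟨Bh, hBh⟩ : ∃ Bh : Fin n → ℝ, ∀ i, Bh i = βh i + δh i := ⟨_, fun i => rfl⟩
  have hfeas : ∀ z, ∑ i, (y i - m.1 i) * A.mulVec z i
      = ∑ i, Bv i * Dv.mulVec z i + ∑ i, Bh i * Dh.mulVec z i := by
    intro z
    have h8 := hF8 z
    rw [hK] at h8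
    have e1 : ∑ i, Bv i * Dv.mulVec z i
        = ∑ i, βv i * Dv.mulVec z i + ∑ i, δv i * Dv.mulVec z i := by
      rw [← Finset.sum_add_distrib]
      exact Finset.sum_congr rfl fun i _ => by rw [hBv]; ring
    have e2 : ∑ i, Bh i * Dh.mulVec z i
        = ∑ i, βh i * Dh.mulVec z i + ∑ i, δh i * Dh.mulVec z i := by
      rw [← Finset.sum_add_distrib]
      exact Finset.sum_congr rfl fun i _ => by rw [hBh]; ring
    rw [e1, e2]
    linarith
  have hfeasM : Aᵀ.mulVec (fun i => y i - m.1 i) = Dvᵀ.mulVec Bv + Dhᵀ.mulVec Bh := by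
    funext k
    have h := hfeas (Pi.single k 1)
    rw [aux_swap A, aux_swap Dv, aux_swap Dh, aux_single_sum, aux_single_sum,
      aux_single_sum] at h
    exact h
  have hBbound : ∀ i, τ i = 1 → Real.sqrt ((Bv i)^2 + (Bh i)^2) ≤ lam := by
    intro i hi
    have hne : ¬ (τ i = 0) := by rw [hi]; exact one_ne_zero
    rw [hBv, hBh, hδv, hδh, if_neg hne, if_neg hne, add_zero, add_zero]
    exact hβbound i
  -- value equality
  have hval : -(1/2) * ∑ i, (y i - m.1 i)^2 + ∑ i, (y i - m.1 i) * y i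
      = (1/2) * ∑ i, (y i - m.1 i)^2
        + lam * ∑ i, Real.sqrt ((m.2.1 i)^2 + (m.2.2 i)^2) := by
    have h1 : ∑ i, (y i - m.1 i) * y i - ∑ i, (y i - m.1 i)^2
        = ∑ i, (y i - m.1 i) * m.1 i := by
      rw [← Finset.sum_sub_distrib]
      exact Finset.sum_congr rfl fun i _ => by ring
    linarith [hcs, h1]
  -- primal value at xs
  have hprimal_xs : (1/2) * ∑ i, (y i - A.mulVec xs i)^2
        + lam * ∑ i, Real.sqrt ((Dv.mulVec xs i)^2 + (Dh.mulVec xs i)^2)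
      = (1/2) * ∑ i, (y i - m.1 i)^2
        + lam * ∑ i, Real.sqrt ((m.2.1 i)^2 + (m.2.2 i)^2) := by
    rw [hm1, hm21, hm22]
  -- final assembly
  have hInf : sInf ((fun x : Fin n → ℝ =>
        (((1 / 2) * ∑ i, (y i - A.mulVec x i) ^ 2
          + lam * ∑ i, Real.sqrt ((Dv.mulVec x i) ^ 2 + (Dh.mulVec x i) ^ 2) : ℝ) : EReal)) ''
      {x : Fin n → ℝ | ∀ i, τ i = 0 → Dv.mulVec x i = 0 ∧ Dh.mulVec x i = 0})
      = (((1/2) * ∑ i, (y i - m.1 i)^2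
        + lam * ∑ i, Real.sqrt ((m.2.1 i)^2 + (m.2.2 i)^2) : ℝ) : EReal) := by
    apply le_antisymm
    · refine sInf_le ⟨xs, hxsV, ?_⟩
      exact congrArg Real.toEReal hprimal_xs
    · refine le_sInf ?_
      rintro b ⟨x, hxV, rfl⟩
      rw [EReal.coe_le_coe_iff]
      exact hmin (T x) ⟨x, hxV, rfl⟩
  have hSup : sSup ((fun p : (Fin n → ℝ) × (Fin n → ℝ) × (Fin n → ℝ) =>
        ((-(1 / 2) * ∑ i, (p.1 i) ^ 2 + ∑ i, p.1 i * y i : ℝ) : EReal)) ''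
      {p : (Fin n → ℝ) × (Fin n → ℝ) × (Fin n → ℝ) |
        Aᵀ.mulVec p.1 = Dvᵀ.mulVec p.2.1 + Dhᵀ.mulVec p.2.2
        ∧ ∀ i, τ i = 1 → Real.sqrt ((p.2.1 i) ^ 2 + (p.2.2 i) ^ 2) ≤ lam})
      = (((1/2) * ∑ i, (y i - m.1 i)^2
        + lam * ∑ i, Real.sqrt ((m.2.1 i)^2 + (m.2.2 i)^2) : ℝ) : EReal) := by
    apply le_antisymm
    · refine sSup_le ?_
      rintro b ⟨p, ⟨hpe, hpb⟩, rfl⟩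
      rw [EReal.coe_le_coe_iff]
      -- weak duality against xs
      have hquad : (0:ℝ) ≤ ∑ i, (y i - A.mulVec xs i - p.1 i)^2 :=
        Finset.sum_nonneg fun i _ => sq_nonneg _
      have hexp : ∑ i, (y i - A.mulVec xs i - p.1 i)^2
          = ∑ i, (y i - A.mulVec xs i)^2 - 2*(∑ i, p.1 i * y i)
            + 2*(∑ i, p.1 i * A.mulVec xs i) + ∑ i, (p.1 i)^2 := by
        have step1 : ∑ i, (y i - A.mulVec xs i - p.1 i)^2
            = ∑ i, (((y i - A.mulVec xs i)^2 - 2*(p.1 i * y i))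
              + (2*(p.1 i * A.mulVec xs i) + (p.1 i)^2)) :=
          Finset.sum_congr rfl fun i _ => by ring
        rw [step1, Finset.sum_add_distrib, Finset.sum_add_distrib, Finset.sum_sub_distrib,
          ← Finset.mul_sum, ← Finset.mul_sum]
        ring
      have hswap : ∑ i, p.1 i * A.mulVec xs i = ∑ k, Aᵀ.mulVec p.1 k * xs k := aux_swap A p.1 xs
      rw [hpe] at hswap
      have hsplit : ∑ k, (Dvᵀ.mulVec p.2.1 + Dhᵀ.mulVec p.2.2) k * xs k
          = ∑ i, p.2.1 i * Dv.mulVec xs i + ∑ i, p.2.2 i * Dh.mulVec xs i := by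
        have step1 : ∑ k, (Dvᵀ.mulVec p.2.1 + Dhᵀ.mulVec p.2.2) k * xs k
            = ∑ k, (Dvᵀ.mulVec p.2.1 k * xs k + Dhᵀ.mulVec p.2.2 k * xs k) :=
          Finset.sum_congr rfl fun k _ => by rw [Pi.add_apply]; ring
        rw [step1, Finset.sum_add_distrib, ← aux_swap Dv, ← aux_swap Dh]
      have hCS : ∀ i ∈ Finset.univ,
          p.2.1 i * Dv.mulVec xs i + p.2.2 i * Dh.mulVec xs i
          ≤ lam * Real.sqrt ((Dv.mulVec xs i)^2 + (Dh.mulVec xs i)^2) := by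
        intro i _
        rcases hτ i with h0 | h1
        · obtain ⟨hv, hw⟩ := hxsV i h0
          rw [hv, hw]
          simp
        · calc p.2.1 i * Dv.mulVec xs i + p.2.2 i * Dh.mulVec xs i
              ≤ Real.sqrt ((p.2.1 i)^2 + (p.2.2 i)^2)
                * Real.sqrt ((Dv.mulVec xs i)^2 + (Dh.mulVec xs i)^2) :=
                aux_cauchy _ _ _ _
            _ ≤ lam * Real.sqrt ((Dv.mulVec xs i)^2 + (Dh.mulVec xs i)^2) :=
                mul_le_mul_of_nonneg_right (hpb i h1) (Real.sqrt_nonneg _)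
      have hsum := Finset.sum_le_sum hCS
      rw [Finset.sum_add_distrib, ← Finset.mul_sum] at hsum
      rw [← hprimal_xs]
      linarith [hquad, hexp, hswap, hsplit, hsum]
    · refine le_sSup ⟨((fun i => y i - m.1 i), Bv, Bh), ⟨hfeasM, hBbound⟩, ?_⟩
      exact congrArg Real.toEReal hval
  rw [hInf, hSup]
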